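/- Let V be a finite set, let m ≥ 3, and let u₁,…,u_m be distinct elements of V forming a cycle C = {e_k : k = 1,…,m} with edges e_k = {u_k, u_{k+1}} (indices taken modulo m, so e_m = {u_m, u_1}). Let D ⊆ C have odd cardinality, let S_in = {u ∈ V : u is the common endpoint of two distinct edges of D}, and let S_out = {u ∈ V : u is the common endpoint of two distinct edges of C∖D}. Then for every x ∈ {0,1}^V, setting z_{{i,j}} = x_i · x_j for each edge {i,j} ∈ C: Σ_{e∈C∖D} z_e − Σ_{e∈D} z_e ≤ Σ_{u∈S_out} x_u − Σ_{u∈S_in} x_u + (|D| − 1)/2. (Validity of the odd-cycle inequality for the monomial set.) -/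

import Mathlib

open Finset

/-- **Validity of the odd-cycle inequality for the monomial set.**
Let `u₁,…,u_m` (`m ≥ 3`) be distinct vertices forming a cycle with edges
`e_k = {u_k, u_{k+1}}` (indices mod `m`), let `D` be an odd-cardinality subset of the cycle,
let `S_in` (resp. `S_out`) be the vertices that are common endpoints of two distinct edges of
`D` (resp. of `C∖D`).  Then for every binary `x`, with `z_e = x_i·x_j` on each edge,
`Σ_{e∈C∖D} z_e − Σ_{e∈D} z_e ≤ Σ_{u∈S_out} x_u − Σ_{u∈S_in} x_u + (|D|−1)/2`. -/
theorem odd_cycle_inequality_valid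
    {V : Type*} [Fintype V] [DecidableEq V]
    (m : ℕ) (hm : 3 ≤ m)
    (u : Fin m → V) (hu : Function.Injective u)
    (D : Finset (Fin m)) (hD : Odd D.card)
    (x : V → ℝ) (hx : ∀ w : V, x w = 0 ∨ x w = 1) :
    let nxt : Fin m → Fin m := fun k => ⟨(k.val + 1) % m, Nat.mod_lt _ (by omega)⟩
    let edge : Fin m → Finset V := fun k => {u k, u (nxt k)}
    let z : Fin m → ℝ := fun k => x (u k) * x (u (nxt k))
    let Sin : Finset V := Finset.univ.filter
      (fun w => ∃ k ∈ D, ∃ l ∈ D, k ≠ l ∧ w ∈ edge k ∧ w ∈ edge l)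
    let Sout : Finset V := Finset.univ.filter
      (fun w => ∃ k ∈ Dᶜ, ∃ l ∈ Dᶜ, k ≠ l ∧ w ∈ edge k ∧ w ∈ edge l)
    ∑ k ∈ Dᶜ, z k - ∑ k ∈ D, z k ≤
      (∑ w ∈ Sout, x w) - (∑ w ∈ Sin, x w) + ((D.card : ℝ) - 1) / 2 := by
  intro nxt edge z Sin Sout
  haveI : NeZero m := ⟨by omega⟩
  -- `nxt` is addition by one in the group `Fin m`
  have hnxt : ∀ k : Fin m, nxt k = k + 1 := by
    intro k
    apply Fin.ext
    simp [nxt, Fin.add_def, Fin.val_one', Nat.mod_eq_of_lt (show 1 < m by omega)]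
  have h10 : (1 : Fin m) ≠ 0 := by
    intro h
    have := congrArg Fin.val h
    simp [Fin.val_one', Nat.mod_eq_of_lt (show 1 < m by omega)] at this
  -- basic abbreviations
  set y : Fin m → ℝ := fun k => x (u k) with hy_def
  have hy : ∀ k, y k = 0 ∨ y k = 1 := fun k => hx (u k)
  have hz : ∀ k, z k = y k * y (k + 1) := by
    intro k; simp only [z, hnxt k]; rfl
  set a : Fin m → ℝ := fun k => if k ∈ D then 1 else 0 with ha_def
  have ha : ∀ k, a k = 0 ∨ a k = 1 := by
    intro k; by_cases h : k ∈ D <;> simp [ha_def, h]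
  set d : Fin m → ℝ := fun k => y k + y (k + 1) - 2 * (y k * y (k + 1)) with hd_def
  have hd : ∀ k, d k = 0 ∨ d k = 1 := by
    intro k
    rcases hy k with h1 | h1 <;> rcases hy (k + 1) with h2 | h2 <;>
      simp [hd_def, h1, h2] <;> norm_num
  -- membership in an edge
  have hmem : ∀ (i k : Fin m), u i ∈ edge k ↔ (i = k ∨ i = k + 1) := by
    intro i k
    simp only [edge, hnxt k, Finset.mem_insert, Finset.mem_singleton, hu.eq_iff]
  have hne : ∀ i : Fin m, i ≠ i - 1 := by
    intro i h
    apply h10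
    have : i - (i - 1) = i - i := by rw [← h]
    simpa using this.symm
  -- characterization of common endpoints, for an arbitrary edge subset
  have hchar : ∀ (E : Finset (Fin m)) (w : V),
      ((∃ k ∈ E, ∃ l ∈ E, k ≠ l ∧ w ∈ edge k ∧ w ∈ edge l) ↔
        (∃ i, w = u i ∧ i ∈ E ∧ i - 1 ∈ E)) := by
    intro E w
    constructor
    · rintro ⟨k, hk, l, hl, hkl, hwk, hwl⟩
      have : w = u k ∨ w = u (k + 1) := by
        simpa [edge, hnxt k, Finset.mem_insert, Finset.mem_singleton] using hwk
      rcases this with hw | hw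
      · -- w = u k
        subst hw
        rcases (hmem k l).mp hwl with h | h
        · exact absurd h hkl
        · refine ⟨k, rfl, hk, ?_⟩
          have : k - 1 = l := by rw [h]; exact add_sub_cancel_right l 1
          rwa [this]
      · -- w = u (k+1)
        subst hw
        rcases (hmem (k + 1) l).mp hwl with h | h
        · refine ⟨k + 1, rfl, h ▸ hl, ?_⟩
          have : (k + 1) - 1 = k := by exact add_sub_cancel_right k 1
          rwa [this]
        · exact absurd (add_right_cancel h) hkl
    · rintro ⟨i, rfl, hi, hi1⟩
      refine ⟨i, hi, i - 1, hi1, hne i, ?_, ?_⟩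
      · rw [hmem]; left; rfl
      · rw [hmem]; right; rw [sub_add_cancel]
  -- rewrite the vertex sums as sums over `Fin m`
  have hsum : ∀ (E : Finset (Fin m)),
      ∑ w ∈ Finset.univ.filter
        (fun w => ∃ k ∈ E, ∃ l ∈ E, k ≠ l ∧ w ∈ edge k ∧ w ∈ edge l), x w
      = ∑ i : Fin m, (if i ∈ E then (1:ℝ) else 0) * (if i - 1 ∈ E then (1:ℝ) else 0) * y i := by
    intro E
    have himg : Finset.univ.filter
        (fun w => ∃ k ∈ E, ∃ l ∈ E, k ≠ l ∧ w ∈ edge k ∧ w ∈ edge l)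
        = (Finset.univ.filter (fun i : Fin m => i ∈ E ∧ i - 1 ∈ E)).image u := by
      ext w
      simp only [Finset.mem_filter, Finset.mem_univ, true_and, Finset.mem_image, hchar E w]
      constructor
      · rintro ⟨i, rfl, hi, hi1⟩; exact ⟨i, ⟨hi, hi1⟩, rfl⟩
      · rintro ⟨i, ⟨hi, hi1⟩, rfl⟩; exact ⟨i, rfl, hi, hi1⟩
    rw [himg, Finset.sum_image (fun i _ j _ h => hu h)]
    rw [Finset.sum_filter]
    apply Finset.sum_congr rfl
    intro i _
    by_cases h1 : i ∈ E <;> by_cases h2 : i - 1 ∈ E <;> simp [h1, h2, hy_def]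
  have hSin : ∑ w ∈ Sin, x w = ∑ i : Fin m, a i * a (i - 1) * y i := by
    simpa [ha_def] using hsum D
  have hSout : ∑ w ∈ Sout, x w
      = ∑ i : Fin m, (1 - a i) * (1 - a (i - 1)) * y i := by
    have := hsum Dᶜ
    rw [this]
    apply Finset.sum_congr rfl
    intro i _
    by_cases h1 : i ∈ D <;> by_cases h2 : i - 1 ∈ D <;>
      simp [ha_def, h1, h2, Finset.mem_compl]
  -- edge sums as sums over `Fin m`
  have hDsum : ∀ f : Fin m → ℝ, ∑ k ∈ D, f k = ∑ k : Fin m, a k * f k := by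
    intro f
    rw [← Finset.sum_filter_add_sum_filter_not Finset.univ (· ∈ D) (fun k => a k * f k)]
    have h1 : ∀ k ∈ Finset.univ.filter (· ∈ D), a k * f k = f k := by
      intro k hk; simp only [Finset.mem_filter] at hk; simp [ha_def, hk.2]
    have h2 : ∀ k ∈ Finset.univ.filter (¬ · ∈ D), a k * f k = 0 := by
      intro k hk; simp only [Finset.mem_filter] at hk; simp [ha_def, hk.2]
    rw [Finset.sum_congr rfl h1, Finset.sum_congr rfl h2]
    simp [Finset.filter_mem_eq_inter]
  have hDcsum : ∀ f : Fin m → ℝ, ∑ k ∈ Dᶜ, f k = ∑ k : Fin m, (1 - a k) * f k := by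
    intro f
    have h0 : ∑ k ∈ Dᶜ, f k = ∑ k : Fin m, f k - ∑ k ∈ D, f k := by
      rw [← Finset.sum_add_sum_compl D f]; ring
    rw [h0, hDsum, ← Finset.sum_sub_distrib]
    apply Finset.sum_congr rfl
    intro i _; ring
  -- reindexing along the cycle
  have hshift : ∀ g : Fin m → ℝ, ∑ k : Fin m, g (k + 1) = ∑ k : Fin m, g k := by
    intro g
    exact Fintype.sum_equiv (Equiv.addRight (1 : Fin m)) _ _ (fun k => rfl)
  have hshift' : ∀ g h : Fin m → ℝ,
      ∑ k : Fin m, g (k - 1) * h k = ∑ k : Fin m, g k * h (k + 1) := by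
    intro g h
    refine (Fintype.sum_equiv (Equiv.addRight (1 : Fin m))
      (fun k => g k * h (k + 1)) (fun k => g (k - 1) * h k) ?_).symm
    intro k
    simp
  -- cardinality of D as a real sum
  have hcard : ∑ k : Fin m, a k = (D.card : ℝ) := by
    simp [ha_def, Finset.filter_mem_eq_inter]
  -- the key zero-sum identity
  have hzero : ∑ k : Fin m,
      ((1 - a k) * z k - a k * z k - (1 - a k) * (1 - a (k - 1)) * y k
        + a k * a (k - 1) * y k - a k / 2
        + (a k * (1 - d k) + (1 - a k) * d k) / 2) = 0 := by
    have hper : ∀ k : Fin m,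
        (1 - a k) * z k - a k * z k - (1 - a k) * (1 - a (k - 1)) * y k
          + a k * a (k - 1) * y k - a k / 2
          + (a k * (1 - d k) + (1 - a k) * d k) / 2
        = (a (k - 1) * y k - a k * y (k + 1)) + (y (k + 1) - y k) / 2 := by
      intro k
      rw [hz k]
      simp only [hd_def]
      ring
    rw [Finset.sum_congr rfl (fun k _ => hper k), Finset.sum_add_distrib]
    have h1 : ∑ k : Fin m, (a (k - 1) * y k - a k * y (k + 1)) = 0 := by
      rw [Finset.sum_sub_distrib, hshift' a y, sub_self]
    have h2 : ∑ k : Fin m, (y (k + 1) - y k) / 2 = 0 := by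
      rw [← Finset.sum_div, Finset.sum_sub_distrib, hshift y]
      simp
    rw [h1, h2]
    norm_num
  -- decompose the zero-sum identity
  have hdec : ∑ k : Fin m, ((1 - a k) * z k) - ∑ k : Fin m, (a k * z k)
      - ∑ k : Fin m, ((1 - a k) * (1 - a (k - 1)) * y k)
      + ∑ k : Fin m, (a k * a (k - 1) * y k)
      - (∑ k : Fin m, a k) / 2
      + (∑ k : Fin m, (a k * (1 - d k) + (1 - a k) * d k)) / 2 = 0 := by
    have h := hzero
    simp only [Finset.sum_add_distrib, Finset.sum_sub_distrib] at h
    have hq1 : ∑ k : Fin m, a k / 2 = (∑ k : Fin m, a k) / 2 :=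
      (Finset.sum_div _ _ _).symm
    have hq2 : ∑ k : Fin m, (a k * (1 - d k) + (1 - a k) * d k) / 2
        = (∑ k : Fin m, (a k * (1 - d k) + (1 - a k) * d k)) / 2 :=
      (Finset.sum_div _ _ _).symm
    linarith [h, hq1, hq2]
  -- E ≥ 1 by parity
  have hterm01 : ∀ k : Fin m, (a k * (1 - d k) + (1 - a k) * d k) = 0
      ∨ (a k * (1 - d k) + (1 - a k) * d k) = 1 := by
    intro k
    rcases ha k with h1 | h1 <;> rcases hd k with h2 | h2 <;> rw [h1, h2] <;> norm_num
  have hE1 : 1 ≤ ∑ k : Fin m, (a k * (1 - d k) + (1 - a k) * d k) := by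
    by_contra hlt
    push_neg at hlt
    have hall : ∀ k : Fin m, (a k * (1 - d k) + (1 - a k) * d k) = 0 := by
      intro k
      have hnonneg : ∀ j ∈ (Finset.univ : Finset (Fin m)),
          (0:ℝ) ≤ a j * (1 - d j) + (1 - a j) * d j := by
        intro j _
        rcases hterm01 j with h | h <;> rw [h] <;> norm_num
      have hle : (a k * (1 - d k) + (1 - a k) * d k)
          ≤ ∑ k : Fin m, (a k * (1 - d k) + (1 - a k) * d k) :=
        Finset.single_le_sum hnonneg (Finset.mem_univ k)
      rcases hterm01 k with h | h
      · exact h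
      · exfalso; rw [h] at hle; linarith
    have hda : ∀ k : Fin m, d k = a k := by
      intro k
      have h0 := hall k
      rcases ha k with h1 | h1 <;> rcases hd k with h2 | h2 <;>
        rw [h1, h2] <;> rw [h1, h2] at h0 <;> linarith
    -- then Σ d = |D| but Σ d = 2 Σ (y k - z k), an even natural number
    have hsumd : ∑ k : Fin m, d k = (D.card : ℝ) := by
      rw [Finset.sum_congr rfl (fun k _ => hda k), hcard]
    have hsumd2 : ∑ k : Fin m, d k = 2 * ∑ k : Fin m, (y k - y k * y (k + 1)) := by
      have hyy : ∑ k : Fin m, y (k + 1) = ∑ k : Fin m, y k := hshift y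
      have e1 : ∑ k : Fin m, d k
          = ∑ k : Fin m, y k + ∑ k : Fin m, y (k + 1)
            - 2 * ∑ k : Fin m, (y k * y (k + 1)) := by
        rw [Finset.mul_sum, ← Finset.sum_add_distrib, ← Finset.sum_sub_distrib]
      have e2 : ∑ k : Fin m, (y k - y k * y (k + 1))
          = ∑ k : Fin m, y k - ∑ k : Fin m, (y k * y (k + 1)) :=
        Finset.sum_sub_distrib _ _
      rw [e1, e2, hyy]
      ring
    have hw01 : ∀ k : Fin m, y k - y k * y (k + 1) = 0 ∨ y k - y k * y (k + 1) = 1 := by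
      intro k
      rcases hy k with h1 | h1 <;> rcases hy (k + 1) with h2 | h2 <;>
        rw [h1, h2] <;> norm_num
    have hnat : ∑ k : Fin m, (y k - y k * y (k + 1))
        = ((Finset.univ.filter (fun k : Fin m => y k - y k * y (k + 1) = 1)).card : ℝ) := by
      rw [Finset.card_filter]
      push_cast
      apply Finset.sum_congr rfl
      intro k _
      rcases hw01 k with h | h <;> rw [h] <;> norm_num
    have hfin : (D.card : ℝ)
        = ((2 * (Finset.univ.filter (fun k : Fin m => y k - y k * y (k + 1) = 1)).card : ℕ) : ℝ) := by
      push_cast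
      rw [← hsumd, hsumd2, hnat]
    have hcard_eq : D.card
        = 2 * (Finset.univ.filter (fun k : Fin m => y k - y k * y (k + 1) = 1)).card :=
      Nat.cast_injective hfin
    rw [hcard_eq] at hD
    exact (Nat.not_odd_iff_even.mpr ⟨_, by ring⟩) hD
  -- conclude
  rw [hSin, hSout, hDsum z, hDcsum z]
  linarith [hdec, hE1, hcard]
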